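/- (Net II lower bound for partially saturated states.) Let λ, μ > 0, c a positive integer with λ < cμ, ρ = λ/μ, and let p(n) be the M/M/c stationary distribution. For any integer m with 0 < m < c, ∑_{n=0}^{c-1} min(m, c-n)·p(n) ≥ m·(1 - λ/(cμ)). -/

import Mathlib

/-- Net II lower bound for partially saturated states: for `0 < m < c`,
`∑_{n<c} min(m, c−n) p(n) ≥ m (1 − λ/(cμ))`. -/
theorem net_two_kappa_lower_bound (lam mu : ℝ) (c : ℕ)
    (hlam : 0 < lam) (hmu : 0 < mu) (hc : 0 < c) (hstab : lam < c * mu)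
    (P0 : ℝ)
    (hP0 : P0 = ((∑ n ∈ Finset.range c, (lam / mu) ^ n / (Nat.factorial n : ℝ)) +
        (lam / mu) ^ c / ((Nat.factorial c : ℝ) * (1 - lam / (c * mu))))⁻¹)
    (p : ℕ → ℝ)
    (hp : ∀ n, p n = if n < c then P0 * (lam / mu) ^ n / (Nat.factorial n : ℝ)
        else P0 * (lam / mu) ^ n / ((Nat.factorial c : ℝ) * (c : ℝ) ^ (n - c)))
    (m : ℕ) (hm0 : 0 < m) (hmc : m < c) :
    (m : ℝ) * (1 - lam / (c * mu)) ≤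
      ∑ n ∈ Finset.range c, (min m (c - n) : ℕ) * p n := by
  have hmu' : mu ≠ 0 := ne_of_gt hmu
  obtain ⟨ρ, hρdef⟩ : ∃ r : ℝ, r = lam / mu := ⟨_, rfl⟩
  simp only [← hρdef] at hP0 hp
  have hρpos : 0 < ρ := hρdef ▸ div_pos hlam hmu
  have hcR : (0:ℝ) < (c:ℝ) := by exact_mod_cast hc
  have hρc : ρ < (c:ℝ) := by
    rw [hρdef, div_lt_iff₀ hmu]; linarith
  have h1 : lam / ((c:ℝ) * mu) = ρ / (c:ℝ) := by
    rw [hρdef, div_div, mul_comm mu ((c:ℝ))]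
  have hfrac : (0:ℝ) < 1 - ρ / (c:ℝ) := by
    have : ρ / (c:ℝ) < 1 := (div_lt_one hcR).2 hρc
    linarith
  have hsub : (0:ℝ) < (c:ℝ) - ρ := by linarith
  set k := c - 1 with hkdef
  have hck : c = k + 1 := (Nat.succ_pred_eq_of_pos hc).symm
  set S : ℕ → ℝ := fun j => ∑ n ∈ Finset.range j, ρ ^ n / (Nat.factorial n : ℝ) with hSdef
  have hSpos : ∀ j, 0 < j → 0 < S j := by
    intro j hj
    apply Finset.sum_pos
    · intro n _
      exact div_pos (pow_pos hρpos n) (by exact_mod_cast n.factorial_pos)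
    · exact Finset.nonempty_range_iff.2 hj.ne'
  set D := S c + ρ ^ c / ((Nat.factorial c : ℝ) * (1 - ρ / (c:ℝ))) with hDdef
  have hDpos : 0 < D := by
    apply add_pos (hSpos c hc)
    apply div_pos (pow_pos hρpos c)
    exact mul_pos (by exact_mod_cast c.factorial_pos) hfrac
  have hP0' : P0 = D⁻¹ := by rw [hP0, hDdef, hSdef, h1]
  have hP0pos : 0 < P0 := hP0' ▸ inv_pos.2 hDpos
  -- identity for the weighted sum ∑ n * ρ^n/n!
  have hA : ∀ j : ℕ, ∑ n ∈ Finset.range (j+1), (n:ℝ) * ρ ^ n / (Nat.factorial n : ℝ)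
      = ρ * S j := by
    intro j
    induction j with
    | zero => simp [hSdef]
    | succ j ih =>
      rw [Finset.sum_range_succ, ih]
      have hSsucc : S (j+1) = S j + ρ ^ j / (Nat.factorial j : ℝ) := by
        simp [hSdef, Finset.sum_range_succ]
      rw [hSsucc]
      have hfac : ((Nat.factorial (j+1) : ℝ)) = ((j:ℝ)+1) * (Nat.factorial j : ℝ) := by
        push_cast [Nat.factorial_succ]; ring
      have hfj : (Nat.factorial j : ℝ) ≠ 0 := by exact_mod_cast j.factorial_pos.ne'
      have hj1 : ((j:ℝ)+1) ≠ 0 := by positivity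
      rw [hfac]
      field_simp
      push_cast
      ring
  -- key equality: ∑_{n<c} (c-n) ρ^n/n! = (c - ρ) * D
  have hE : ∑ n ∈ Finset.range c, ((c - n : ℕ):ℝ) * (ρ ^ n / (Nat.factorial n : ℝ))
      = ((c:ℝ) - ρ) * D := by
    have hcast : ∀ n ∈ Finset.range c, ((c - n : ℕ):ℝ) * (ρ ^ n / (Nat.factorial n : ℝ))
        = (c:ℝ) * (ρ ^ n / (Nat.factorial n : ℝ)) - (n:ℝ) * ρ ^ n / (Nat.factorial n : ℝ) := by
      intro n hn
      have hnc : n ≤ c := le_of_lt (Finset.mem_range.mp hn)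
      have : ((c - n : ℕ):ℝ) = (c:ℝ) - (n:ℝ) := by
        push_cast [Nat.cast_sub hnc]; ring
      rw [this]; ring
    rw [Finset.sum_congr rfl hcast, Finset.sum_sub_distrib, ← Finset.mul_sum]
    have hAc : ∑ n ∈ Finset.range c, (n:ℝ) * ρ ^ n / (Nat.factorial n : ℝ) = ρ * S k := by
      rw [hck]; exact hA k
    have hSc : ∑ n ∈ Finset.range c, ρ ^ n / (Nat.factorial n : ℝ)
        = S k + ρ ^ k / (Nat.factorial k : ℝ) := by
      rw [hck]; simp [hSdef, Finset.sum_range_succ]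
    have hScD : S c = S k + ρ ^ k / (Nat.factorial k : ℝ) := hSc
    have hρc' : ρ ^ c = ρ * ρ ^ k := by rw [hck]; ring
    have hfacc : (Nat.factorial c : ℝ) = (c:ℝ) * (Nat.factorial k : ℝ) := by
      rw [hck]; push_cast [Nat.factorial_succ]; ring
    have hfk : (Nat.factorial k : ℝ) ≠ 0 := by exact_mod_cast k.factorial_pos.ne'
    have hfrac' : (1 - ρ / (c:ℝ)) ≠ 0 := ne_of_gt hfrac
    have hsub' : ((c:ℝ) - ρ) ≠ 0 := ne_of_gt hsub
    have hcne : (c:ℝ) ≠ 0 := ne_of_gt hcR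
    rw [hAc, hDdef, hScD, hSc, hρc', hfacc]
    rw [show (1 - ρ / (c:ℝ)) = ((c:ℝ) - ρ) / (c:ℝ) by field_simp]
    field_simp
    ring
  -- rewrite the sum using hp
  have hsum : ∑ n ∈ Finset.range c, ((min m (c - n) : ℕ):ℝ) * p n
      = ∑ n ∈ Finset.range c, ((min m (c - n) : ℕ):ℝ) * (P0 * (ρ ^ n / (Nat.factorial n : ℝ))) := by
    apply Finset.sum_congr rfl
    intro n hn
    rw [hp n, if_pos (Finset.mem_range.mp hn)]
    ring
  rw [hsum]
  -- pointwise lower bound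
  have hpt : ∀ n ∈ Finset.range c,
      ((m:ℝ) / (c:ℝ)) * (((c - n : ℕ):ℝ) * (P0 * (ρ ^ n / (Nat.factorial n : ℝ))))
      ≤ ((min m (c - n) : ℕ):ℝ) * (P0 * (ρ ^ n / (Nat.factorial n : ℝ))) := by
    intro n hn
    have hnc : n < c := Finset.mem_range.mp hn
    have hwpos : 0 < P0 * (ρ ^ n / (Nat.factorial n : ℝ)) :=
      mul_pos hP0pos (div_pos (pow_pos hρpos n) (by exact_mod_cast n.factorial_pos))
    have hkey : ((m:ℝ) / (c:ℝ)) * ((c - n : ℕ):ℝ) ≤ ((min m (c - n) : ℕ):ℝ) := by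
      rw [div_mul_eq_mul_div, div_le_iff₀ hcR]
      rcases le_total m (c - n) with h | h
      · rw [min_eq_left h]
        have h1 : ((c - n : ℕ):ℝ) ≤ (c:ℝ) := by exact_mod_cast Nat.sub_le c n
        have hm : (0:ℝ) ≤ (m:ℝ) := Nat.cast_nonneg m
        nlinarith
      · rw [min_eq_right h]
        have h1 : ((m:ℕ):ℝ) ≤ (c:ℝ) := by exact_mod_cast hmc.le
        have hcn : (0:ℝ) ≤ ((c - n : ℕ):ℝ) := Nat.cast_nonneg _
        nlinarith
    calc ((m:ℝ) / (c:ℝ)) * (((c - n : ℕ):ℝ) * (P0 * (ρ ^ n / (Nat.factorial n : ℝ))))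
        = (((m:ℝ) / (c:ℝ)) * ((c - n : ℕ):ℝ)) * (P0 * (ρ ^ n / (Nat.factorial n : ℝ))) := by ring
      _ ≤ ((min m (c - n) : ℕ):ℝ) * (P0 * (ρ ^ n / (Nat.factorial n : ℝ))) :=
          mul_le_mul_of_nonneg_right hkey hwpos.le
  refine le_trans ?_ (Finset.sum_le_sum hpt)
  -- compute the lower sum exactly
  have hval : ∑ n ∈ Finset.range c,
      ((m:ℝ) / (c:ℝ)) * (((c - n : ℕ):ℝ) * (P0 * (ρ ^ n / (Nat.factorial n : ℝ))))
      = ((m:ℝ) / (c:ℝ)) * P0 * (((c:ℝ) - ρ) * D) := by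
    rw [← hE, Finset.mul_sum]
    apply Finset.sum_congr rfl
    intro n _
    ring
  rw [hval, hP0', h1]
  have hcne : (c:ℝ) ≠ 0 := ne_of_gt hcR
  have hDne : D ≠ 0 := ne_of_gt hDpos
  apply le_of_eq
  field_simp
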